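/- Let ρ = ∑_{i∈I} p_i |e_i⟩⟨e_i| ⊗ ϱ_i be a density matrix on ℂ^d ⊗ (ℂ^{D_1} ⊗ ⋯ ⊗ ℂ^{D_N}), where {e_i} is an orthonormal family in ℂ^d, p_i are probabilities, ϱ_i are density matrices on the environment space, and assume that for every k the single-party reductions satisfy ϱ_i^k ϱ_j^k = 0 for i ≠ j. Let Π_i^k be the support projector of ϱ_i^k. Then for every nonempty subset K ⊆ {1,…,N} and all indices i ∈ I and (i_k)_{k∈K} ∈ I^K, the outcome probability p(i, (i_k)) = tr[ρ · (|e_i⟩⟨e_i| ⊗ ⊗_{k∈K} Π_{i_k}^k ⊗ 1)] vanishes unless i_k = i for all k ∈ K; likewise, without the system measurement, tr[ρ · (1 ⊗ ⊗_{k∈K} Π_{i_k}^k ⊗ 1)] vanishes unless all i_k are equal. -/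

import Mathlib

open scoped Kronecker Matrix ComplexOrder BigOperators
open Matrix

noncomputable section

/-- The rank-one operator `|v⟩⟨w| = v wᴴ`. -/
def ketBra {n : Type*} (v w : n → ℂ) : Matrix n n ℂ := Matrix.vecMulVec v (star w)

/-- A density matrix: positive semidefinite with unit trace. -/
def IsDensityMatrix {n : Type*} [Fintype n] (ρ : Matrix n n ℂ) : Prop :=
  ρ.PosSemidef ∧ ρ.trace = 1

/-- An orthonormal family of vectors. -/
def OrthonormalFamily {n I : Type*} [Fintype n] [DecidableEq I] (e : I → n → ℂ) : Prop :=
  ∀ i j, star (e i) ⬝ᵥ e j = (if i = j then 1 else 0)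

/-- The `N`-fold Kronecker (tensor) product of a family of matrices. -/
def tensorFamily {N : ℕ} {D : Fin N → ℕ} (M : ∀ k, Matrix (Fin (D k)) (Fin (D k)) ℂ) :
    Matrix (∀ k, Fin (D k)) (∀ k, Fin (D k)) ℂ :=
  fun a a' => ∏ k, M k (a k) (a' k)

/-- The Kronecker (tensor) product of the matrices `M k` over the factors `k ∈ K`. -/
def tensorOn {N : ℕ} {D : Fin N → ℕ} (K : Finset (Fin N))
    (M : ∀ k, Matrix (Fin (D k)) (Fin (D k)) ℂ) :
    Matrix (∀ k : K, Fin (D k.1)) (∀ k : K, Fin (D k.1)) ℂ :=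
  fun a a' => ∏ k : K, M k.1 (a k) (a' k)

/-- The partial trace of a matrix on an `N`-fold tensor product over all
tensor factors *not* in `K` (entrywise: sum over equal indices in the traced factors). -/
def reduceTo {N : ℕ} {D : Fin N → ℕ} (K : Finset (Fin N))
    (M : Matrix (∀ k, Fin (D k)) (∀ k, Fin (D k)) ℂ) :
    Matrix (∀ k : K, Fin (D k.1)) (∀ k : K, Fin (D k.1)) ℂ :=
  fun a a' => ∑ b : ∀ k : {k : Fin N // k ∉ K}, Fin (D k.1),
    M (fun k => if h : k ∈ K then a ⟨k, h⟩ else b ⟨k, h⟩)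
      (fun k => if h : k ∈ K then a' ⟨k, h⟩ else b ⟨k, h⟩)

/-- The single-party reduction: the partial trace over all tensor factors except the `k`-th. -/
def reduceSingle {N : ℕ} {D : Fin N → ℕ} (k : Fin N)
    (M : Matrix (∀ l, Fin (D l)) (∀ l, Fin (D l)) ℂ) :
    Matrix (Fin (D k)) (Fin (D k)) ℂ :=
  fun a a' => ∑ b : ∀ l : {l : Fin N // l ≠ k}, Fin (D l.1),
    M (fun l => if h : l = k then cast (congrArg (fun i => Fin (D i)) h.symm) a else b ⟨l, h⟩)
      (fun l => if h : l = k then cast (congrArg (fun i => Fin (D i)) h.symm) a' else b ⟨l, h⟩)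

/-- The support projector of a Hermitian matrix: the orthogonal projection onto its range. -/
def suppProj {n : Type*} [Fintype n] [DecidableEq n] (A : Matrix n n ℂ) : Matrix n n ℂ :=
  if hA : A.IsHermitian then
    (hA.eigenvectorUnitary : Matrix n n ℂ) *
      Matrix.diagonal (fun i => if hA.eigenvalues i = 0 then (0 : ℂ) else 1) *
      (hA.eigenvectorUnitary : Matrix n n ℂ)ᴴ
  else 0
section Aux

/-- Insert a value at position `k` into a function defined away from `k`. -/
def ins {N : ℕ} {D : Fin N → ℕ} (k : Fin N) (c : Fin (D k))
    (b : ∀ l : {l : Fin N // l ≠ k}, Fin (D l.1)) : ∀ l, Fin (D l) :=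
  fun l => if h : l = k then cast (congrArg (fun i => Fin (D i)) h.symm) c else b ⟨l, h⟩

lemma ins_self {N : ℕ} {D : Fin N → ℕ} (k : Fin N) (c : Fin (D k))
    (b : ∀ l : {l : Fin N // l ≠ k}, Fin (D l.1)) : ins k c b k = c := by
  simp [ins]

lemma ins_ne {N : ℕ} {D : Fin N → ℕ} (k : Fin N) (c : Fin (D k))
    (b : ∀ l : {l : Fin N // l ≠ k}, Fin (D l.1)) {l : Fin N} (h : l ≠ k) :
    ins k c b l = b ⟨l, h⟩ := dif_neg h

lemma reduceSingle_apply {N : ℕ} {D : Fin N → ℕ} (k : Fin N)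
    (M : Matrix (∀ l, Fin (D l)) (∀ l, Fin (D l)) ℂ) (c c' : Fin (D k)) :
    reduceSingle k M c c' = ∑ b, M (ins k c b) (ins k c' b) := rfl

/-- The splitting equivalence for Pi types. -/
def splitE {N : ℕ} (D : Fin N → ℕ) (k : Fin N) :
    (∀ l, Fin (D l)) ≃ Fin (D k) × (∀ l : {l : Fin N // l ≠ k}, Fin (D l.1)) where
  toFun a := (a k, fun l => a l.1)
  invFun p := ins k p.1 p.2
  left_inv a := by
    funext l
    by_cases h : l = k
    · subst h; simp [ins]
    · simp [ins, h]
  right_inv p := by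
    refine Prod.ext (ins_self _ _ _) ?_
    funext l
    exact ins_ne _ _ _ l.2

/-- Matrices with a given value at one tensor site and identity elsewhere. -/
def singleSite {N : ℕ} {D : Fin N → ℕ} (k : Fin N) (P : Matrix (Fin (D k)) (Fin (D k)) ℂ) :
    ∀ l, Matrix (Fin (D l)) (Fin (D l)) ℂ :=
  fun l => if h : l = k then cast (congrArg (fun i => Matrix (Fin (D i)) (Fin (D i)) ℂ) h.symm) P
    else 1

lemma singleSite_self {N : ℕ} {D : Fin N → ℕ} (k : Fin N)
    (P : Matrix (Fin (D k)) (Fin (D k)) ℂ) : singleSite k P k = P := by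
  simp [singleSite]

lemma singleSite_ne {N : ℕ} {D : Fin N → ℕ} (k : Fin N)
    (P : Matrix (Fin (D k)) (Fin (D k)) ℂ) {l : Fin N} (h : l ≠ k) :
    singleSite k P l = 1 := dif_neg h

lemma tensorFamily_mul {N : ℕ} {D : Fin N → ℕ}
    (M M' : ∀ k, Matrix (Fin (D k)) (Fin (D k)) ℂ) :
    tensorFamily M * tensorFamily M' = tensorFamily (fun k => M k * M' k) := by
  ext a b
  simp only [Matrix.mul_apply, tensorFamily]
  rw [Finset.prod_univ_sum, Fintype.piFinset_univ]
  exact Finset.sum_congr rfl fun c _ => (Finset.prod_mul_distrib).symm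

lemma tensorFamily_isHermitian {N : ℕ} {D : Fin N → ℕ}
    {M : ∀ k, Matrix (Fin (D k)) (Fin (D k)) ℂ} (h : ∀ k, (M k).IsHermitian) :
    (tensorFamily M).IsHermitian := by
  ext a b
  simp only [Matrix.conjTranspose_apply, tensorFamily, star_prod]
  exact Finset.prod_congr rfl fun k _ => (h k).apply _ _

lemma psd_trace_zero {n : Type*} [Fintype n] {M : Matrix n n ℂ}
    (hM : M.PosSemidef) (h : M.trace = 0) : M = 0 := by
  obtain ⟨B, rfl⟩ : ∃ B : Matrix n n ℂ, M = Bᴴ * B := by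
    classical
    open scoped MatrixOrder in
    exact CStarAlgebra.nonneg_iff_eq_star_mul_self.mp hM.nonneg
  have h2 : (Bᴴ * B).trace = ∑ i, ∑ j, (Complex.normSq (B j i) : ℂ) := by
    simp [Matrix.trace, Matrix.diag, Matrix.mul_apply, Matrix.conjTranspose_apply,
      Complex.normSq_eq_conj_mul_self]
  rw [h2] at h
  have h1 : ∑ i, ∑ j, Complex.normSq (B j i) = 0 := by exact_mod_cast h
  have hB : B = 0 := by
    ext j i
    have hi := (Finset.sum_eq_zero_iff_of_nonneg
      (fun i _ => Finset.sum_nonneg fun j _ => Complex.normSq_nonneg _)).mp h1 i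
      (Finset.mem_univ i)
    have hj := (Finset.sum_eq_zero_iff_of_nonneg
      (fun j _ => Complex.normSq_nonneg _)).mp hi j (Finset.mem_univ j)
    simpa using Complex.normSq_eq_zero.mp hj
  rw [hB]; simp

end Aux
section Aux2
variable {n : Type*} [Fintype n] [DecidableEq n]

lemma suppProj_isHermitian {A : Matrix n n ℂ} (hA : A.IsHermitian) :
    (suppProj A).IsHermitian := by
  rw [suppProj, dif_pos hA]
  apply Matrix.isHermitian_mul_mul_conjTranspose
  rw [Matrix.isHermitian_diagonal_iff]
  intro i
  rw [_root_.isSelfAdjoint_iff]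
  split <;> simp

lemma suppProj_mul_self {A : Matrix n n ℂ} (hA : A.IsHermitian) :
    suppProj A * suppProj A = suppProj A := by
  rw [suppProj, dif_pos hA]
  have hU : (hA.eigenvectorUnitary : Matrix n n ℂ)ᴴ * (hA.eigenvectorUnitary : Matrix n n ℂ)
      = 1 := by
    rw [← Matrix.star_eq_conjTranspose]
    exact Matrix.mem_unitaryGroup_iff'.mp hA.eigenvectorUnitary.2
  set U : Matrix n n ℂ := (hA.eigenvectorUnitary : Matrix n n ℂ)
  set dg : Matrix n n ℂ := Matrix.diagonal (fun i => if hA.eigenvalues i = 0 then (0 : ℂ) else 1)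
    with hdg
  have hdd : dg * dg = dg := by
    have hfun : (fun i => (if hA.eigenvalues i = 0 then (0:ℂ) else 1)
        * if hA.eigenvalues i = 0 then (0:ℂ) else 1)
        = fun i => if hA.eigenvalues i = 0 then (0:ℂ) else 1 := by
      funext i; split <;> simp
    rw [hdg, Matrix.diagonal_mul_diagonal, hfun]
  rw [Matrix.mul_assoc (U*dg) Uᴴ (U*dg*Uᴴ), ← Matrix.mul_assoc Uᴴ (U*dg) Uᴴ,
    ← Matrix.mul_assoc Uᴴ U dg, hU, Matrix.one_mul, ← Matrix.mul_assoc (U*dg) dg Uᴴ,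
    Matrix.mul_assoc U dg dg, hdd]

lemma mul_suppProj_eq_zero {A B : Matrix n n ℂ} (hA : A.IsHermitian) (h : B * A = 0) :
    B * suppProj A = 0 := by
  rw [suppProj, dif_pos hA]
  have hU : star (hA.eigenvectorUnitary : Matrix n n ℂ) * (hA.eigenvectorUnitary : Matrix n n ℂ)
      = 1 := Matrix.mem_unitaryGroup_iff'.mp hA.eigenvectorUnitary.2
  set U : Matrix n n ℂ := (hA.eigenvectorUnitary : Matrix n n ℂ)
  have h0 : B * (U * Matrix.diagonal (RCLike.ofReal ∘ hA.eigenvalues) * star U) = 0 := by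
    have hs := hA.spectral_theorem; rw [Unitary.conjStarAlgAut_apply] at hs; rw [← hs]; exact h
  have h1 : B * U * Matrix.diagonal (RCLike.ofReal ∘ hA.eigenvalues) = 0 := by
    have h0' := congrArg (fun X => X * U) h0
    simp only [Matrix.zero_mul, Matrix.mul_assoc, hU, Matrix.mul_one] at h0'
    simpa [Matrix.mul_assoc] using h0'
  have h2 : B * U * Matrix.diagonal (fun i => if hA.eigenvalues i = 0 then (0 : ℂ) else 1)
      = 0 := by
    ext a b
    have h1ab := congrFun (congrFun h1 a) b
    rw [Matrix.mul_diagonal] at h1ab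
    rw [Matrix.mul_diagonal, Matrix.zero_apply]
    by_cases hb : hA.eigenvalues b = 0
    · rw [if_pos hb, mul_zero]
    · rw [if_neg hb, mul_one]
      rw [Matrix.zero_apply] at h1ab
      have hne : (RCLike.ofReal ∘ hA.eigenvalues) b ≠ (0 : ℂ) := by
        simpa [Function.comp] using hb
      exact (mul_eq_zero.mp h1ab).resolve_right hne
  calc B * (U * Matrix.diagonal (fun i => if hA.eigenvalues i = 0 then (0 : ℂ) else 1) * Uᴴ)
      = B * U * Matrix.diagonal (fun i => if hA.eigenvalues i = 0 then (0 : ℂ) else 1) * Uᴴ := by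
        simp only [Matrix.mul_assoc]
    _ = 0 := by rw [h2, Matrix.zero_mul]

lemma reduceSingle_isHermitian {N : ℕ} {D : Fin N → ℕ} (k : Fin N)
    {M : Matrix (∀ l, Fin (D l)) (∀ l, Fin (D l)) ℂ} (hM : M.IsHermitian) :
    (reduceSingle k M).IsHermitian := by
  ext a a'
  simp only [Matrix.conjTranspose_apply, reduceSingle_apply, star_sum]
  exact Finset.sum_congr rfl fun b _ => hM.apply _ _

omit [DecidableEq n] in
lemma trace_ketBra_mul (v w x y : n → ℂ) :
    (ketBra v w * ketBra x y).trace = (star w ⬝ᵥ x) * (star y ⬝ᵥ v) := by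
  rw [dotProduct, dotProduct, Finset.sum_mul_sum]
  simp only [Matrix.trace, Matrix.diag, Matrix.mul_apply, ketBra, Matrix.vecMulVec_apply,
    Pi.star_apply]
  rw [Finset.sum_comm]
  exact Finset.sum_congr rfl fun b _ => Finset.sum_congr rfl fun a _ => by ring

end Aux2
section Aux3

lemma trace_mul_singleSite {N : ℕ} {D : Fin N → ℕ} (k0 : Fin N)
    (σ : Matrix (∀ k, Fin (D k)) (∀ k, Fin (D k)) ℂ)
    (P : Matrix (Fin (D k0)) (Fin (D k0)) ℂ) :
    (σ * tensorFamily (singleSite k0 P)).trace = (reduceSingle k0 σ * P).trace := by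
  classical
  have hA : ∀ a a' : ∀ k, Fin (D k), tensorFamily (singleSite k0 P) a' a
      = P (a' k0) (a k0) * (if ∀ k, k ≠ k0 → a' k = a k then 1 else 0) := by
    intro a a'
    rw [tensorFamily, ← Finset.mul_prod_erase Finset.univ _ (Finset.mem_univ k0), singleSite_self]
    congr 1
    rw [Finset.prod_congr rfl (fun k hk => by
          rw [singleSite_ne k0 P (Finset.mem_erase.mp hk).1, Matrix.one_apply]),
        Finset.prod_boole]
    congr 1
    simp only [eq_iff_iff]
    constructor
    · intro h k hk
      exact h k (Finset.mem_erase.mpr ⟨hk, Finset.mem_univ k⟩)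
    · intro h k hk
      exact h k (Finset.mem_erase.mp hk).1
  have hcond : ∀ (c c' : Fin (D k0)) (b b' : ∀ l : {l : Fin N // l ≠ k0}, Fin (D l.1)),
      (∀ k, k ≠ k0 → ins k0 c' b' k = ins k0 c b k) ↔ b' = b := by
    intro c c' b b'
    constructor
    · intro h
      funext l
      have := h l.1 l.2
      rwa [ins_ne _ _ _ l.2, ins_ne _ _ _ l.2] at this
    · rintro rfl k hk
      rw [ins_ne _ _ _ hk, ins_ne _ _ _ hk]
  have expand : (σ * tensorFamily (singleSite k0 P)).trace
      = ∑ a : ∀ k, Fin (D k), ∑ a' : ∀ k, Fin (D k),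
          σ a a' * (P (a' k0) (a k0) * (if ∀ k, k ≠ k0 → a' k = a k then 1 else 0)) := by
    simp only [Matrix.trace, Matrix.diag, Matrix.mul_apply, hA]
  rw [expand]
  rw [← Equiv.sum_comp (splitE D k0).symm (fun a => ∑ a' : ∀ k, Fin (D k),
        σ a a' * (P (a' k0) (a k0) * (if ∀ k, k ≠ k0 → a' k = a k then 1 else 0)))]
  have expand2 : ∀ p : Fin (D k0) × (∀ l : {l : Fin N // l ≠ k0}, Fin (D l.1)),
      (∑ a' : ∀ k, Fin (D k), σ ((splitE D k0).symm p) a'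
        * (P (a' k0) (((splitE D k0).symm p) k0)
          * (if ∀ k, k ≠ k0 → a' k = ((splitE D k0).symm p) k then 1 else 0)))
      = ∑ p' : Fin (D k0) × (∀ l : {l : Fin N // l ≠ k0}, Fin (D l.1)),
          σ (ins k0 p.1 p.2) (ins k0 p'.1 p'.2) * (P p'.1 p.1 * if p'.2 = p.2 then 1 else 0) := by
    intro p
    rw [← Equiv.sum_comp (splitE D k0).symm]
    refine Finset.sum_congr rfl fun p' _ => ?_
    have e1 : (splitE D k0).symm p = ins k0 p.1 p.2 := rfl
    have e2 : (splitE D k0).symm p' = ins k0 p'.1 p'.2 := rfl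
    rw [e1, e2, ins_self, ins_self]
    congr 1
    congr 1
    rw [if_congr (hcond p.1 p'.1 p.2 p'.2) rfl rfl]
  refine Eq.trans (Finset.sum_congr rfl fun p _ => expand2 p) ?_
  have rhs : (reduceSingle k0 σ * P).trace
      = ∑ c : Fin (D k0), ∑ c' : Fin (D k0),
          (∑ b : ∀ l : {l : Fin N // l ≠ k0}, Fin (D l.1), σ (ins k0 c b) (ins k0 c' b))
            * P c' c := by
    simp only [Matrix.trace, Matrix.diag, Matrix.mul_apply, reduceSingle_apply]
  rw [rhs]
  rw [Fintype.sum_prod_type]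
  refine Finset.sum_congr rfl fun c _ => ?_
  rw [Finset.sum_comm, Fintype.sum_prod_type]
  refine Finset.sum_congr rfl fun c' _ => ?_
  rw [Finset.sum_mul]
  refine Finset.sum_congr rfl fun b' _ => ?_
  simp only [mul_ite, mul_one, mul_zero, Finset.sum_ite_eq, Finset.mem_univ, if_true]

lemma key_lemma {N : ℕ} {D : Fin N → ℕ}
    {σ : Matrix (∀ k, Fin (D k)) (∀ k, Fin (D k)) ℂ} (hσ : σ.PosSemidef)
    (M : ∀ k, Matrix (Fin (D k)) (Fin (D k)) ℂ)
    (hherm : ∀ k, (M k).IsHermitian) (hidem : ∀ k, M k * M k = M k)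
    (k0 : Fin N) (hz : reduceSingle k0 σ * M k0 = 0) :
    (σ * tensorFamily M).trace = 0 := by
  classical
  set A := tensorFamily (singleSite k0 (M k0)) with hAdef
  set B := tensorFamily (fun k => if k = k0 then 1 else M k) with hBdef
  have hsplit : A * B * A = tensorFamily M := by
    rw [hAdef, hBdef, tensorFamily_mul, tensorFamily_mul]
    refine congrArg tensorFamily (funext fun k => ?_)
    by_cases h : k = k0
    · subst h; rw [singleSite_self, if_pos rfl, mul_one, hidem]
    · rw [singleSite_ne _ _ h, if_neg h, one_mul, mul_one]
  have hAH : A.IsHermitian := by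
    apply tensorFamily_isHermitian
    intro k
    by_cases h : k = k0
    · subst h; rw [singleSite_self]; exact hherm k
    · rw [singleSite_ne _ _ h]; exact Matrix.isHermitian_one
  have hAA : A * A = A := by
    rw [hAdef, tensorFamily_mul]
    refine congrArg tensorFamily (funext fun k => ?_)
    by_cases h : k = k0
    · subst h; rw [singleSite_self, hidem]
    · rw [singleSite_ne _ _ h, one_mul]
  have htrA : (σ * A).trace = 0 := by
    rw [hAdef, trace_mul_singleSite, hz, Matrix.trace_zero]
  have hAσA : A * σ * A = 0 := by
    apply psd_trace_zero
    · have h := hσ.conjTranspose_mul_mul_same A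
      rwa [hAH.eq] at h
    · rw [Matrix.trace_mul_cycle, hAA, Matrix.trace_mul_comm]
      exact htrA
  rw [← hsplit, ← Matrix.mul_assoc, ← Matrix.mul_assoc, Matrix.trace_mul_comm,
    ← Matrix.mul_assoc, ← Matrix.mul_assoc, hAσA, Matrix.zero_mul, Matrix.trace_zero]

end Aux3

/-- Agreement property of SBS states: all observers measuring their subenvironments
obtain the same outcome, equal to the outcome of the direct measurement on the system. -/
theorem stmt_5 {d N : ℕ} {D : Fin N → ℕ} {I : Type*} [Fintype I] [DecidableEq I]
    (p : I → ℝ) (hp0 : ∀ i, 0 ≤ p i) (hp1 : ∑ i, p i = 1)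
    (e : I → Fin d → ℂ) (he : OrthonormalFamily e)
    (ϱ : I → Matrix (∀ k, Fin (D k)) (∀ k, Fin (D k)) ℂ)
    (hϱ : ∀ i, IsDensityMatrix (ϱ i))
    (horth : ∀ k : Fin N, ∀ i j, i ≠ j → reduceSingle k (ϱ i) * reduceSingle k (ϱ j) = 0)
    (ρ : Matrix (Fin d × ∀ k, Fin (D k)) (Fin d × ∀ k, Fin (D k)) ℂ)
    (hρ : ρ = ∑ i, (p i : ℂ) • (ketBra (e i) (e i) ⊗ₖ ϱ i))
    (K : Finset (Fin N)) (hK : K.Nonempty) (f : Fin N → I) :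
    (∀ i : I, (∃ k ∈ K, f k ≠ i) →
      (ρ * (ketBra (e i) (e i) ⊗ₖ
        tensorFamily (fun k => if k ∈ K then suppProj (reduceSingle k (ϱ (f k))) else 1))).trace
        = 0) ∧
    ((∃ k ∈ K, ∃ l ∈ K, f k ≠ f l) →
      (ρ * ((1 : Matrix (Fin d) (Fin d) ℂ) ⊗ₖ
        tensorFamily (fun k => if k ∈ K then suppProj (reduceSingle k (ϱ (f k))) else 1))).trace
        = 0) := by
  classical
  set Mf : ∀ k, Matrix (Fin (D k)) (Fin (D k)) ℂ :=
    fun k => if k ∈ K then suppProj (reduceSingle k (ϱ (f k))) else 1 with hMf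
  have hherm : ∀ k, (Mf k).IsHermitian := by
    intro k
    simp only [hMf]
    by_cases h : k ∈ K
    · simp only [if_pos h]
      exact suppProj_isHermitian (reduceSingle_isHermitian k (hϱ (f k)).1.1)
    · simp only [if_neg h]; exact Matrix.isHermitian_one
  have hidem : ∀ k, Mf k * Mf k = Mf k := by
    intro k
    simp only [hMf]
    by_cases h : k ∈ K
    · simp only [if_pos h]
      exact suppProj_mul_self (reduceSingle_isHermitian k (hϱ (f k)).1.1)
    · simp only [if_neg h, Matrix.one_mul]
  have hkey : ∀ (i : I) (k0 : Fin N), k0 ∈ K → f k0 ≠ i →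
      (ϱ i * tensorFamily Mf).trace = 0 := by
    intro i k0 hk0 hfi
    refine key_lemma (hϱ i).1 Mf hherm hidem k0 ?_
    have hz := horth k0 i (f k0) (fun h => hfi h.symm)
    have hH : (reduceSingle k0 (ϱ (f k0))).IsHermitian :=
      reduceSingle_isHermitian k0 (hϱ (f k0)).1.1
    simp only [hMf, if_pos hk0]
    exact mul_suppProj_eq_zero hH hz
  constructor
  · rintro i ⟨k0, hk0, hfi⟩
    rw [hρ, Finset.sum_mul, Matrix.trace_sum]
    refine Finset.sum_eq_zero fun j _ => ?_
    rw [Matrix.smul_mul, Matrix.trace_smul, ← Matrix.mul_kronecker_mul, Matrix.trace_kronecker]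
    by_cases hji : j = i
    · subst hji
      rw [hkey j k0 hk0 hfi, mul_zero, smul_zero]
    · rw [trace_ketBra_mul, he j i, if_neg hji, zero_mul, zero_mul, smul_zero]
  · rintro ⟨k, hk, l, hl, hfkl⟩
    rw [hρ, Finset.sum_mul, Matrix.trace_sum]
    refine Finset.sum_eq_zero fun j _ => ?_
    rw [Matrix.smul_mul, Matrix.trace_smul, ← Matrix.mul_kronecker_mul, Matrix.trace_kronecker]
    have hz : (ϱ j * tensorFamily Mf).trace = 0 := by
      by_cases hfk : f k = j
      · refine hkey j l hl ?_
        intro hfl; exact hfkl (by rw [hfk, hfl])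
      · exact hkey j k hk hfk
    rw [hz, mul_zero, smul_zero]
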